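/- Let (X, d) be a metric space, H : X → [0, +∞] a functional, and Φ : [0,∞) × X → X a semigroup such that for all μ, ν ∈ X with H(μ) < ∞ one has the Evolution Variational Inequality: limsup_{h→0⁺} (d²(Φ_h μ, ν) − d²(μ, ν))/(2h) ≤ H(ν) − H(μ), and such that H(Φ_s μ) ≤ H(μ) for all s ≥ 0. Let a, b, x ∈ X with H(a), H(b), H(x) < ∞, and suppose x minimizes y ↦ d²(a, y) + d²(y, b) over the orbit {Φ_s x : s ≥ 0}, i.e. d²(a, x) + d²(x, b) ≤ d²(a, Φ_s x) + d²(Φ_s x, b) for all s ≥ 0. Then 2 H(x) ≤ H(a) + H(b). -/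

import Mathlib

open Filter Set

/-- abstract flow interchange. If `Φ` satisfies the Evolution Variational
Inequality for the functional `H`, decreases `H`, and `x` minimizes
`y ↦ d²(a,y) + d²(y,b)` over its own `Φ`-orbit, then `2 H(x) ≤ H(a) + H(b)`. -/
theorem flow_interchange {X : Type*} [MetricSpace X] (H : X → ENNReal) (Φ : ℝ → X → X)
    (hEVI : ∀ μ ν : X, H μ < ⊤ →
      Filter.limsup
        (fun h : ℝ => (((dist (Φ h μ) ν ^ 2 - dist μ ν ^ 2) / (2 * h) : ℝ) : EReal))
        (nhdsWithin 0 (Set.Ioi 0)) ≤ (H ν : EReal) - (H μ : EReal))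
    (hdec : ∀ s : ℝ, 0 ≤ s → ∀ μ : X, H (Φ s μ) ≤ H μ)
    (a b x : X) (ha : H a < ⊤) (hb : H b < ⊤) (hx : H x < ⊤)
    (hopt : ∀ s : ℝ, 0 ≤ s →
      dist a x ^ 2 + dist x b ^ 2 ≤ dist a (Φ s x) ^ 2 + dist (Φ s x) b ^ 2) :
    2 * H x ≤ H a + H b := by
  set F := nhdsWithin (0:ℝ) (Set.Ioi 0) with hF
  set q1 : ℝ → EReal := fun h => (((dist (Φ h x) a ^ 2 - dist x a ^ 2) / (2 * h) : ℝ) : EReal)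
  set q2 : ℝ → EReal := fun h => (((dist (Φ h x) b ^ 2 - dist x b ^ 2) / (2 * h) : ℝ) : EReal)
  have h1 : Filter.limsup q1 F ≤ (H a : EReal) - (H x : EReal) := hEVI x a hx
  have h2 : Filter.limsup q2 F ≤ (H b : EReal) - (H x : EReal) := hEVI x b hx
  -- finiteness of the right-hand sides
  have coeH : ∀ y : X, H y < ⊤ → (H y : EReal) = (((H y).toReal : ℝ) : EReal) := by
    intro y hy
    rw [← EReal.toReal_coe_ennreal]
    exact (EReal.coe_toReal (by simpa [EReal.coe_ennreal_eq_top_iff] using hy.ne)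
      (EReal.coe_ennreal_ne_bot _)).symm
  have hfa : ((H a : EReal) - (H x : EReal)) ≠ ⊤ := by
    rw [coeH a ha, coeH x hx, ← EReal.coe_sub]; exact EReal.coe_ne_top _
  have hfb : ((H b : EReal) - (H x : EReal)) ≠ ⊤ := by
    rw [coeH b hb, coeH x hx, ← EReal.coe_sub]; exact EReal.coe_ne_top _
  have hnt1 : Filter.limsup q1 F ≠ ⊤ := (lt_of_le_of_lt h1 (lt_top_iff_ne_top.2 hfa)).ne
  have hnt2 : Filter.limsup q2 F ≠ ⊤ := (lt_of_le_of_lt h2 (lt_top_iff_ne_top.2 hfb)).ne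
  -- the sum of quotients is nonnegative on Ioi 0
  have hpos : ∀ᶠ h in F, (0 : EReal) ≤ q1 h + q2 h := by
    filter_upwards [self_mem_nhdsWithin] with h (hh : h ∈ Set.Ioi (0:ℝ))
    have hh0 : (0:ℝ) < h := hh
    have hO := hopt h hh0.le
    have hnum : 0 ≤ (dist (Φ h x) a ^ 2 - dist x a ^ 2) + (dist (Φ h x) b ^ 2 - dist x b ^ 2) := by
      rw [dist_comm a x, dist_comm a (Φ h x)] at hO
      linarith
    have : (0:ℝ) ≤ (dist (Φ h x) a ^ 2 - dist x a ^ 2) / (2 * h)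
        + (dist (Φ h x) b ^ 2 - dist x b ^ 2) / (2 * h) := by
      rw [← add_div]
      positivity
    show (0:EReal) ≤ q1 h + q2 h
    simp only [q1, q2, ← EReal.coe_add]
    exact_mod_cast this
  have hboundsum : (0 : EReal) ≤ Filter.limsup (fun h => q1 h + q2 h) F := by
    haveI : F.NeBot := nhdsGT_neBot 0
    exact le_limsup_of_frequently_le hpos.frequently
      ⟨⊤, Filter.eventually_map.2 (Filter.Eventually.of_forall fun _ => le_top)⟩
  have hsplit : Filter.limsup (fun h => q1 h + q2 h) F ≤
      Filter.limsup q1 F + Filter.limsup q2 F :=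
    EReal.limsup_add_le (Or.inr hnt2) (Or.inl hnt1)
  have key : (0 : EReal) ≤ ((H a : EReal) - (H x : EReal)) + ((H b : EReal) - (H x : EReal)) :=
    hboundsum.trans (hsplit.trans (add_le_add h1 h2))
  -- translate to real numbers
  set A := (H a).toReal
  set B := (H b).toReal
  set C := (H x).toReal
  have hA : (H a : EReal) = ((A : ℝ) : EReal) := coeH a ha
  have hB : (H b : EReal) = ((B : ℝ) : EReal) := coeH b hb
  have hC : (H x : EReal) = ((C : ℝ) : EReal) := coeH x hx
  rw [hA, hB, hC, ← EReal.coe_sub, ← EReal.coe_sub, ← EReal.coe_add] at key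
  have kreal : (0:ℝ) ≤ (A - C) + (B - C) := by exact_mod_cast key
  have hreal : 2 * C ≤ A + B := by linarith
  have hfin1 : 2 * H x ≠ ⊤ := by
    simp [ENNReal.mul_ne_top, hx.ne]
  have hfin2 : H a + H b ≠ ⊤ := by
    simp [ENNReal.add_ne_top, ha.ne, hb.ne]
  rw [← ENNReal.toReal_le_toReal hfin1 hfin2]
  rw [ENNReal.toReal_mul, ENNReal.toReal_add ha.ne hb.ne]
  simpa using hreal
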